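/- Let m, n ≥ 1, let L_m be an infinite unary regular language of state complexity at most m and L_n a finite unary language of state complexity at most n. If m ≤ n−2, then every word a^t with t ≥ n−2 is in L_m ⊙ L_n, so the state complexity of L_m ⊙ L_n is at most n−1. -/

import Mathlib

/-- Overlap assembly of two languages. -/
def langOA {α : Type*} (L₁ L₂ : Language α) : Language α :=
  {z | ∃ u v w : List α, v ≠ [] ∧ u ++ v ∈ L₁ ∧ v ++ w ∈ L₂ ∧ z = u ++ v ++ w}

/-- `scLe L k` : the state complexity of `L` is at most `k`. -/
def scLe {α : Type*} (L : Language α) (k : ℕ) : Prop :=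
  ∃ (Q : Type) (_ : Fintype Q) (M : DFA α Q), Fintype.card Q ≤ k ∧ M.accepts = L

/-- The unary word `a^k`. -/
def urep (k : ℕ) : List Unit := List.replicate k ()

/-- state of a unary DFA after reading `k` letters -/
def stepN {Q : Type} (M : DFA Unit Q) (k : ℕ) : Q := (fun q => M.step q ())^[k] M.start

lemma unit_eq_urep (x : List Unit) : x = urep x.length :=
  List.eq_replicate_iff.mpr ⟨rfl, fun _ _ => rfl⟩

lemma eval_urep {Q : Type} (M : DFA Unit Q) (k : ℕ) : M.eval (urep k) = stepN M k := by
  induction k with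
  | zero => rfl
  | succ k ih =>
    have h : urep (k + 1) = urep k ++ [()] := by
      simp [urep, List.replicate_add]
    rw [h]
    show List.foldl M.step M.start (urep k ++ [()]) = _
    rw [List.foldl_append]
    have : List.foldl M.step M.start (urep k) = stepN M k := ih
    rw [this]
    simp [stepN, Function.iterate_succ_apply']

lemma mem_iff {Q : Type} (M : DFA Unit Q) (L : Language Unit) (hM : M.accepts = L)
    (k : ℕ) : urep k ∈ L ↔ stepN M k ∈ M.accept := by
  rw [← hM, DFA.mem_accepts]
  exact iff_of_eq (congrArg (· ∈ M.accept) (eval_urep M k))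

lemma stepN_period {Q : Type} (M : DFA Unit Q) {i p : ℕ}
    (h : stepN M (i + p) = stepN M i) {k : ℕ} (hk : i ≤ k) :
    stepN M (k + p) = stepN M k := by
  obtain ⟨d, rfl⟩ := Nat.exists_eq_add_of_le hk
  have e : ∀ a b : ℕ, stepN M (a + b) = (fun q => M.step q ())^[b] (stepN M a) := by
    intro a b
    simp [stepN, Nat.add_comm a b, Function.iterate_add_apply]
  calc stepN M (i + d + p) = stepN M ((i + p) + d) := by rw [show i + d + p = (i+p) + d by omega]
    _ = (fun q => M.step q ())^[d] (stepN M (i + p)) := e _ _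
    _ = (fun q => M.step q ())^[d] (stepN M i) := by rw [h]
    _ = stepN M (i + d) := (e _ _).symm

lemma stepN_period_mul {Q : Type} (M : DFA Unit Q) {i p : ℕ}
    (h : stepN M (i + p) = stepN M i) {k : ℕ} (hk : i ≤ k) :
    ∀ q : ℕ, stepN M (k + q * p) = stepN M k := by
  intro q
  induction q with
  | zero => simp
  | succ q ih =>
    calc stepN M (k + (q + 1) * p) = stepN M ((k + q * p) + p) := by
          rw [show k + (q+1)*p = (k + q*p) + p by ring]
      _ = stepN M (k + q * p) := stepN_period M h (by omega)
      _ = stepN M k := ih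

lemma exists_repeat {Q : Type} [Fintype Q] (M : DFA Unit Q) {c : ℕ}
    (hc : Fintype.card Q ≤ c) :
    ∃ i p : ℕ, 0 < p ∧ i + p ≤ c ∧ stepN M (i + p) = stepN M i := by
  obtain ⟨a, b, hne, heq⟩ := Fintype.exists_ne_map_eq_of_card_lt
    (fun k : Fin (c + 1) => stepN M k.val) (by simpa using Nat.lt_succ_of_le hc)
  have hvne : (a : ℕ) ≠ (b : ℕ) := fun h => hne (Fin.ext h)
  rcases Nat.lt_or_ge a.val b.val with h | h
  · refine ⟨a, b - a, by omega, by omega, ?_⟩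
    rw [show (a : ℕ) + ((b : ℕ) - a) = b by omega]
    exact heq.symm
  · have h' : (b : ℕ) < a := by omega
    refine ⟨b, a - b, by omega, by omega, ?_⟩
    rw [show (b : ℕ) + ((a : ℕ) - b) = a by omega]
    exact heq

lemma finite_bound {L : Language Unit} {n : ℕ} (h : scLe L n) (hfin : L.Finite) :
    ∀ s, urep s ∈ L → s ≤ n - 2 := by
  obtain ⟨Q, _, M, hcard, hM⟩ := h
  by_contra hcon
  push_neg at hcon
  obtain ⟨s, hs, hbig⟩ := hcon
  obtain ⟨i, p, hp, hpc, hper⟩ := exists_repeat M hcard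
  have hi : i ≤ s := by omega
  have hLinf : L.Infinite := by
    refine Set.infinite_of_injective_forall_mem
      (f := fun q : ℕ => urep (s + q * p)) ?_ ?_
    · intro q1 q2 hq
      have hl := congrArg List.length hq
      simp only [urep, List.length_replicate] at hl
      exact Nat.eq_of_mul_eq_mul_right hp (by omega)
    · intro q
      show urep (s + q * p) ∈ L
      rw [mem_iff M L hM] at hs ⊢
      rw [stepN_period_mul M hper hi q]
      exact hs
  exact hLinf hfin

/-- the "chain" DFA on `Fin (d+1)` -/
def chainDFA (L : Language Unit) (d : ℕ) : DFA Unit (Fin (d + 1)) where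
  step q _ := ⟨min (q.val + 1) d, by omega⟩
  start := ⟨0, by omega⟩
  accept := {q | urep q.val ∈ L}

lemma chainDFA_stepN (L : Language Unit) (d : ℕ) (ℓ : ℕ) :
    stepN (chainDFA L d) ℓ = ⟨min ℓ d, by omega⟩ := by
  induction ℓ with
  | zero =>
    apply Fin.ext
    simp [stepN, chainDFA]
  | succ ℓ ih =>
    have : stepN (chainDFA L d) (ℓ + 1)
        = (chainDFA L d).step (stepN (chainDFA L d) ℓ) () := by
      simp [stepN, Function.iterate_succ_apply']
    rw [this, ih]
    apply Fin.ext
    simp [chainDFA]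
    omega

lemma chain_sc (L : Language Unit) (d : ℕ)
    (h : ∀ t, d ≤ t → (urep t ∈ L ↔ urep d ∈ L)) : scLe L (d + 1) := by
  refine ⟨Fin (d + 1), inferInstance, chainDFA L d, by simp, ?_⟩
  ext x
  rw [unit_eq_urep x]
  rw [DFA.mem_accepts]
  show (chainDFA L d).eval (urep x.length) ∈ _ ↔ _
  rw [eval_urep, chainDFA_stepN]
  show urep (min x.length d) ∈ L ↔ urep x.length ∈ L
  rcases Nat.le_total x.length d with hle | hle
  · rw [Nat.min_eq_left hle]
  · rw [Nat.min_eq_right hle]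
    exact (h x.length hle).symm

lemma window {L : Language Unit} {m : ℕ} (hm : 1 ≤ m) (h : scLe L m)
    (hinf : L.Infinite) :
    ∀ t, m - 1 ≤ t → ∃ s, urep s ∈ L ∧ s ≤ t ∧ t ≤ s + (m - 1) := by
  obtain ⟨Q, _, M, hcard, hM⟩ := h
  obtain ⟨i, p, hp, hpc, hper⟩ := exists_repeat M hcard
  -- the set of accepted lengths is infinite
  have hSinf : {k | urep k ∈ L}.Infinite := by
    intro hSfin
    apply hinf
    refine Set.Finite.subset (hSfin.image urep) ?_
    intro x hx
    refine ⟨x.length, ?_, (unit_eq_urep x).symm⟩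
    simp only [Set.mem_setOf_eq]
    rw [← unit_eq_urep x]
    exact hx
  obtain ⟨s₀, hs₀, hgt⟩ := hSinf.exists_gt i
  -- reduce s₀ into the window [i, i+p)
  set r := (s₀ - i) % p with hr
  have hrlt : r < p := Nat.mod_lt _ hp
  have hdm := Nat.div_add_mod (s₀ - i) p
  have hcm : p * ((s₀ - i) / p) = ((s₀ - i) / p) * p := Nat.mul_comm _ _
  have hdec : s₀ = (i + r) + ((s₀ - i) / p) * p := by omega
  have hs₀' : urep s₀ ∈ L := hs₀
  have hs₁ : urep (i + r) ∈ L := by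
    rw [mem_iff M L hM] at hs₀' ⊢
    rw [hdec] at hs₀'
    rwa [stepN_period_mul M hper (by omega) ((s₀ - i) / p)] at hs₀'
  intro t ht
  have hts : i + r ≤ t := by omega
  set D := t - (i + r) with hD
  have hdm2 := Nat.div_add_mod D p
  have hcm2 : p * (D / p) = (D / p) * p := Nat.mul_comm _ _
  have hmod : D % p < p := Nat.mod_lt _ hp
  refine ⟨(i + r) + (D / p) * p, ?_, by omega, by omega⟩
  rw [mem_iff M L hM] at hs₁ ⊢
  rwa [stepN_period_mul M hper (by omega) (D / p)]

lemma top_mem {L : Language Unit} {n : ℕ} (hn3 : 3 ≤ n) (hfin : L.Finite)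
    (h2 : scLe L n) (h2' : ¬ scLe L (n - 1)) : urep (n - 2) ∈ L := by
  by_contra hno
  apply h2'
  have hb := finite_bound h2 hfin
  have hc : ∀ t, n - 2 ≤ t → (urep t ∈ L ↔ urep (n - 2) ∈ L) := by
    intro t ht
    constructor
    · intro hmem
      have : t = n - 2 := le_antisymm (hb t hmem) ht
      rwa [this] at hmem
    · intro hmem
      exact absurd hmem hno
  have := chain_sc L (n - 2) hc
  rwa [show n - 2 + 1 = n - 1 by omega] at this

theorem unary_infinite_finite_small_case (m n : ℕ) (hm : 1 ≤ m) (hn : 1 ≤ n)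
    (hmn : m ≤ n - 2) (L₁ L₂ : Language Unit)
    (hinf : L₁.Infinite) (h₁ : scLe L₁ m)
    (hfin : L₂.Finite) (h₂ : scLe L₂ n) (h₂' : ¬ scLe L₂ (n - 1)) :
    (∀ t, n - 2 ≤ t → urep t ∈ langOA L₁ L₂) ∧ scLe (langOA L₁ L₂) (n - 1) := by
  have hn3 : 3 ≤ n := by omega
  have htop := top_mem hn3 hfin h₂ h₂'
  have part1 : ∀ t, n - 2 ≤ t → urep t ∈ langOA L₁ L₂ := by
    intro t ht
    obtain ⟨s, hsL, hst, hwin⟩ := window hm h₁ hinf t (by omega)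
    refine ⟨urep (t - (n - 2)), urep (s + (n - 2) - t), urep (t - s), ?_, ?_, ?_, ?_⟩
    · intro hnil
      have := congrArg List.length hnil
      simp only [urep, List.length_replicate, List.length_nil] at this
      omega
    · have he : urep (t - (n - 2)) ++ urep (s + (n - 2) - t) = urep s := by
        rw [urep, urep, urep, ← List.replicate_add]
        congr 1
        omega
      rwa [he]
    · have he : urep (s + (n - 2) - t) ++ urep (t - s) = urep (n - 2) := by
        rw [urep, urep, urep, ← List.replicate_add]
        congr 1
        omega
      rwa [he]
    · rw [urep, urep, urep, urep, ← List.replicate_add, ← List.replicate_add]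
      congr 1
      omega
  refine ⟨part1, ?_⟩
  have hc : ∀ t, n - 2 ≤ t → (urep t ∈ langOA L₁ L₂ ↔ urep (n - 2) ∈ langOA L₁ L₂) :=
    fun t ht => iff_of_true (part1 t ht) (part1 (n - 2) le_rfl)
  have := chain_sc (langOA L₁ L₂) (n - 2) hc
  rwa [show n - 2 + 1 = n - 1 by omega] at this
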